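/- arXiv:1402.0052 — 4 statements merged into one kernel-verified Lean document; each statement's English description precedes it below -/
import Mathlib

section
/- Let σ¹, σ² : Fin n → Bool be two fixed assignments that disagree on exactly n₀ of the n variables, and let C be a uniformly random NAE clause of K literals with variables chosen uniformly with replacement and independent uniform polarities. Then the probability that C is simultaneously NAE-unsatisfied by both σ¹ and σ² equals 2^{-K+1}·((n₀/n)^K + (1 - n₀/n)^K). -/
/-- A clause with variables chosen with replacement: `C.1 i` is the variable of literal `i`,
`C.2 i` its polarity. -/
abbrev Clause (n K : ℕ) := (Fin K → Fin n) × (Fin K → Bool)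

/-- Value of the `i`-th literal of clause `C` under assignment `σ`. -/
def litVal {n K : ℕ} (σ : Fin n → Bool) (C : Clause n K) (i : Fin K) : Bool :=
  xor (σ (C.1 i)) (C.2 i)

private lemma bkey1 : ∀ a1 a2 b1 b2 p q : Bool,
    xor a1 p = xor b1 q → xor a2 p = xor b2 q → b1 = b2 → a1 = a2 := by decide

private lemma bkey2 : ∀ a1 a2 b1 b2 p q : Bool,
    xor a1 p = xor b1 q → xor a2 p = xor b2 q → a1 = a2 → b1 = b2 := by decide

private lemma bxor_self_left : ∀ a b : Bool, xor a (xor a b) = b := by decide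

private lemma bkey3 : ∀ a b c : Bool, xor (!a) (xor a c) = xor (!b) (xor b c) := by decide

private lemma bool_ne_iff : ∀ a b : Bool, a ≠ b → b = !a := by decide

/-- The set of doubly-unsatisfying clauses is in bijection with
`Bool × ((Fin K → agree set) ⊕ (Fin K → disagree set))`. -/
noncomputable def goodEquiv {n K : ℕ} (hK : 0 < K) (σ1 σ2 : Fin n → Bool) :
    {C : Clause n K // (∀ i j : Fin K, litVal σ1 C i = litVal σ1 C j) ∧
      (∀ i j : Fin K, litVal σ2 C i = litVal σ2 C j)} ≃
    Bool × ((Fin K → {x : Fin n // σ1 x = σ2 x}) ⊕ (Fin K → {x : Fin n // σ1 x ≠ σ2 x})) where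
  toFun := fun ⟨C, hC⟩ =>
    if h : σ1 (C.1 ⟨0, hK⟩) = σ2 (C.1 ⟨0, hK⟩) then
      (litVal σ1 C ⟨0, hK⟩, Sum.inl (fun i => ⟨C.1 i, by
        have h1 := hC.1 i ⟨0, hK⟩
        have h2 := hC.2 i ⟨0, hK⟩
        simp only [litVal] at h1 h2
        exact bkey1 _ _ _ _ _ _ h1 h2 h⟩))
    else
      (litVal σ1 C ⟨0, hK⟩, Sum.inr (fun i => ⟨C.1 i, by
        have h1 := hC.1 i ⟨0, hK⟩
        have h2 := hC.2 i ⟨0, hK⟩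
        simp only [litVal] at h1 h2
        intro hcon
        exact h (bkey2 _ _ _ _ _ _ h1 h2 hcon)⟩))
  invFun := fun p =>
    match p with
    | (b, Sum.inl v) => ⟨(fun i => (v i).1, fun i => xor (σ1 (v i).1) b), by
        constructor <;> intro i j <;> simp only [litVal]
        · rw [bxor_self_left, bxor_self_left]
        · rw [← (v i).2, ← (v j).2, bxor_self_left, bxor_self_left]⟩
    | (b, Sum.inr v) => ⟨(fun i => (v i).1, fun i => xor (σ1 (v i).1) b), by
        constructor <;> intro i j <;> simp only [litVal]
        · rw [bxor_self_left, bxor_self_left]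
        · rw [bool_ne_iff _ _ (v i).2, bool_ne_iff _ _ (v j).2]
          exact bkey3 _ _ _⟩
  left_inv := by
    rintro ⟨C, hC⟩
    dsimp only
    by_cases h : σ1 (C.1 ⟨0, hK⟩) = σ2 (C.1 ⟨0, hK⟩)
    · rw [dif_pos h]
      apply Subtype.ext
      refine Prod.ext rfl ?_
      funext i
      have h1 := hC.1 i ⟨0, hK⟩
      simp only [litVal] at h1 ⊢
      rw [← h1, bxor_self_left]
    · rw [dif_neg h]
      apply Subtype.ext
      refine Prod.ext rfl ?_
      funext i
      have h1 := hC.1 i ⟨0, hK⟩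
      simp only [litVal] at h1 ⊢
      rw [← h1, bxor_self_left]
  right_inv := by
    rintro ⟨b, v | v⟩ <;> dsimp only
    · rw [dif_pos (v ⟨0, hK⟩).2]
      refine Prod.ext ?_ rfl
      simp only [litVal, bxor_self_left]
    · rw [dif_neg (v ⟨0, hK⟩).2]
      refine Prod.ext ?_ rfl
      simp only [litVal, bxor_self_left]

/-- For two fixed assignments disagreeing on exactly `n₀` variables, and a uniformly random
clause (variables i.i.d. uniform, polarities i.i.d. uniform), the probability that the clause
is NAE-unsatisfied by both assignments (all literal values equal under each) equals
`2^{-K+1} ((n₀/n)^K + (1 - n₀/n)^K)`. -/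
theorem stmt3 {n K : ℕ} (hn : 0 < n) (hK : 1 ≤ K) (σ1 σ2 : Fin n → Bool) (n₀ : ℕ)
    (hdis : Nat.card {i : Fin n // σ1 i ≠ σ2 i} = n₀) :
    (Nat.card {C : Clause n K //
        (∀ i j : Fin K, litVal σ1 C i = litVal σ1 C j) ∧
        (∀ i j : Fin K, litVal σ2 C i = litVal σ2 C j)} : ℝ)
      / (Nat.card (Clause n K) : ℝ)
      = 2 ^ (-(K : ℝ) + 1) * (((n₀ : ℝ) / n) ^ K + (1 - (n₀ : ℝ) / n) ^ K) := by
  classical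
  have hne : Fintype.card {i : Fin n // σ1 i ≠ σ2 i} = n₀ := by
    rw [← Nat.card_eq_fintype_card]; exact hdis
  have hle : n₀ ≤ n := by
    rw [← hne]
    simpa using Fintype.card_subtype_le (fun i : Fin n => σ1 i ≠ σ2 i)
  have heq : Fintype.card {i : Fin n // σ1 i = σ2 i} = n - n₀ := by
    have : Fintype.card {i : Fin n // σ1 i = σ2 i}
        = Fintype.card {i : Fin n // ¬ (σ1 i ≠ σ2 i)} := by
      apply Fintype.card_congr
      exact Equiv.subtypeEquivRight (by intro x; simp)
    rw [this, Fintype.card_subtype_compl, hne, Fintype.card_fin]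
  have hcard : Nat.card {C : Clause n K //
        (∀ i j : Fin K, litVal σ1 C i = litVal σ1 C j) ∧
        (∀ i j : Fin K, litVal σ2 C i = litVal σ2 C j)}
      = 2 * ((n - n₀) ^ K + n₀ ^ K) := by
    rw [Nat.card_congr (goodEquiv hK σ1 σ2)]
    simp [Nat.card_eq_fintype_card, Fintype.card_fun, heq, hne]
  have htot : Nat.card (Clause n K) = n ^ K * 2 ^ K := by
    simp [Nat.card_eq_fintype_card, Fintype.card_fun]
  rw [hcard, htot]
  have h2 : (2 : ℝ) ^ (-(K : ℝ) + 1) = 2 / 2 ^ K := by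
    rw [Real.rpow_add (by norm_num), Real.rpow_one, Real.rpow_neg (by norm_num),
      Real.rpow_natCast]
    ring
  have hsub : ((n - n₀ : ℕ) : ℝ) = (n : ℝ) - (n₀ : ℝ) := Nat.cast_sub hle
  have hn' : (n : ℝ) ≠ 0 := Nat.cast_ne_zero.mpr hn.ne'
  have h2K : (2 : ℝ) ^ K ≠ 0 := by positivity
  rw [h2]
  push_cast [hsub]
  rw [show (1 : ℝ) - (n₀ : ℝ) / n = ((n : ℝ) - n₀) / n by field_simp]
  rw [div_pow, div_pow]
  field_simp
  ring
end

section
/- Fix 0 < ε < 1, set β = ln K / K, η = (ln K / K)², and m = ⌈ε²K / ln K⌉. Then for all sufficiently large K, the number of m-tuples (σ¹,…,σᵐ) of assignments in {0,1}ⁿ such that (β−η)n ≤ ρ(σʲ,σᵏ) ≤ βn for all distinct j,k is at most exp(n·ε²·ln K + n·C·ln ln K + o(n)) for some universal constant C, where ρ denotes Hamming distance. -/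
open Real Filter

lemma ball_card_le' (n t : ℕ) :
    Nat.card {s : Finset (Fin n) // s.card ≤ t} ≤ ∑ r ∈ Finset.range (t+1), n.choose r := by
  rw [Nat.card_eq_fintype_card, Fintype.card_subtype]
  calc (Finset.univ.filter fun s : Finset (Fin n) => s.card ≤ t).card
      ≤ ((Finset.range (t+1)).biUnion fun r => Finset.powersetCard r Finset.univ).card := by
        apply Finset.card_le_card
        intro s hs
        simp only [Finset.mem_filter] at hs
        exact Finset.mem_biUnion.2 ⟨s.card, Finset.mem_range.2 (Nat.lt_succ_of_le hs.2),
          Finset.mem_powersetCard.2 ⟨Finset.subset_univ s, rfl⟩⟩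
    _ ≤ ∑ r ∈ Finset.range (t+1), (Finset.powersetCard r (Finset.univ : Finset (Fin n))).card :=
        Finset.card_biUnion_le
    _ = ∑ r ∈ Finset.range (t+1), n.choose r := by
        simp [Finset.card_powersetCard]

lemma sum_choose_le' (n t : ℕ) (x : ℝ) (hx0 : 0 < x) (hx1 : x ≤ 1) (htn : t ≤ n) :
    (∑ r ∈ Finset.range (t+1), (n.choose r : ℝ)) * x ^ t ≤ (1 + x) ^ n := by
  rw [Finset.sum_mul]
  calc ∑ r ∈ Finset.range (t+1), (n.choose r : ℝ) * x ^ t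
      ≤ ∑ r ∈ Finset.range (t+1), (n.choose r : ℝ) * x ^ r := by
        apply Finset.sum_le_sum
        intro r hr
        exact mul_le_mul_of_nonneg_left
          (pow_le_pow_of_le_one hx0.le hx1 (Nat.lt_succ_iff.1 (Finset.mem_range.1 hr)))
          (by positivity)
    _ ≤ ∑ r ∈ Finset.range (n+1), (n.choose r : ℝ) * x ^ r := by
        apply Finset.sum_le_sum_of_subset_of_nonneg
        · exact Finset.range_subset_range.2 (by omega)
        · intro r _ _; positivity
    _ = (x + 1) ^ n := by
        rw [add_pow]
        exact Finset.sum_congr rfl fun r _ => by ring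
    _ = (1 + x) ^ n := by ring


lemma tuple_card_le' (n m t : ℕ) (hm : 0 < m) (P : (Fin m → (Fin n → Bool)) → Prop)
    (hP : ∀ τ, P τ → ∀ j : Fin m, hammingDist (τ j) (τ ⟨0, hm⟩) ≤ t) :
    Nat.card {τ // P τ} ≤ 2 ^ n * (∑ r ∈ Finset.range (t+1), n.choose r) ^ (m - 1) := by
  classical
  set B := {s : Finset (Fin n) // s.card ≤ t} with hB
  have key : Nat.card {τ // P τ} ≤ Nat.card ((Fin n → Bool) × (Fin (m-1) → B)) := by
    have hball : ∀ (τ : {τ // P τ}) (j : Fin (m-1)),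
        (Finset.univ.filter fun i => τ.1 ⟨j.1+1, by omega⟩ i ≠ τ.1 ⟨0, hm⟩ i).card ≤ t := by
      intro τ j
      simpa [hammingDist] using hP τ.1 τ.2 ⟨j.1+1, by omega⟩
    apply Nat.card_le_card_of_injective (fun τ : {τ // P τ} =>
      ((τ.1 ⟨0, hm⟩ : Fin n → Bool),
       fun j : Fin (m-1) =>
        (⟨Finset.univ.filter fun i => τ.1 ⟨j.1+1, by omega⟩ i ≠ τ.1 ⟨0, hm⟩ i,
          hball τ j⟩ : B)))
    intro τ σ h
    have h1 : τ.1 ⟨0, hm⟩ = σ.1 ⟨0, hm⟩ := congrArg Prod.fst h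
    have h2 : ∀ j : Fin (m-1),
        (Finset.univ.filter fun i => τ.1 ⟨j.1+1, by omega⟩ i ≠ τ.1 ⟨0, hm⟩ i)
          = Finset.univ.filter fun i => σ.1 ⟨j.1+1, by omega⟩ i ≠ σ.1 ⟨0, hm⟩ i := by
      intro j
      exact congrArg Subtype.val (congrFun (congrArg Prod.snd h) j)
    apply Subtype.ext
    funext a i
    by_cases ha : a.1 = 0
    · have : a = ⟨0, hm⟩ := Fin.ext ha
      rw [this]
      exact congrFun h1 i
    · set j : Fin (m-1) := ⟨a.1 - 1, by omega⟩ with hj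
      have haj : (⟨j.1+1, by omega⟩ : Fin m) = a := Fin.ext (by simp [hj]; omega)
      have h3 := h2 j
      rw [haj] at h3
      have h4 : (τ.1 a i ≠ τ.1 ⟨0, hm⟩ i) ↔ (σ.1 a i ≠ σ.1 ⟨0, hm⟩ i) := by
        constructor
        · intro hi
          have : i ∈ Finset.univ.filter fun i => σ.1 a i ≠ σ.1 ⟨0, hm⟩ i := by
            rw [← h3]; simp [hi]
          simpa using this
        · intro hi
          have : i ∈ Finset.univ.filter fun i => τ.1 a i ≠ τ.1 ⟨0, hm⟩ i := by
            rw [h3]; simp [hi]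
          simpa using this
      have h5 : τ.1 ⟨0, hm⟩ i = σ.1 ⟨0, hm⟩ i := congrFun h1 i
      revert h4 h5
      rcases τ.1 a i <;> rcases σ.1 a i <;> rcases τ.1 ⟨0, hm⟩ i <;> rcases σ.1 ⟨0, hm⟩ i <;>
        simp_all
  calc Nat.card {τ // P τ}
      ≤ Nat.card ((Fin n → Bool) × (Fin (m-1) → B)) := key
    _ = 2 ^ n * (Nat.card B) ^ (m-1) := by
        rw [Nat.card_prod, Nat.card_fun]
        simp [Nat.card_eq_fintype_card]
    _ ≤ 2 ^ n * (∑ r ∈ Finset.range (t+1), n.choose r) ^ (m-1) := by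
        apply Nat.mul_le_mul_left
        apply Nat.pow_le_pow_left
        -- Nat.card B ≤ sum
        exact le_trans (le_of_eq rfl) (by
          rw [hB]
          exact (by
            rw [Nat.card_eq_fintype_card, Fintype.card_subtype]
            calc (Finset.univ.filter fun s : Finset (Fin n) => s.card ≤ t).card
                ≤ ((Finset.range (t+1)).biUnion fun r => Finset.powersetCard r Finset.univ).card := by
                  apply Finset.card_le_card
                  intro s hs
                  simp only [Finset.mem_filter] at hs
                  exact Finset.mem_biUnion.2 ⟨s.card, Finset.mem_range.2 (Nat.lt_succ_of_le hs.2),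
                    Finset.mem_powersetCard.2 ⟨Finset.subset_univ s, rfl⟩⟩
              _ ≤ ∑ r ∈ Finset.range (t+1), (Finset.powersetCard r (Finset.univ : Finset (Fin n))).card :=
                  Finset.card_biUnion_le
              _ = ∑ r ∈ Finset.range (t+1), n.choose r := by
                  simp [Finset.card_powersetCard]))


set_option maxHeartbeats 1000000 in
/-- Counting bound on m-tuples of assignments with all pairwise Hamming distances in
`[(β-η)n, βn]`, where `β = ln K / K`, `η = (ln K / K)²`, `m = ⌈ε²K / ln K⌉`: the number of
such tuples is at most `exp(nε² ln K + nC ln ln K + o(n))` for a universal constant `C`. -/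
theorem stmt4 :
    ∃ C : ℝ, ∀ ε : ℝ, 0 < ε → ε < 1 →
      ∃ K₀ : ℕ, ∀ K : ℕ, K₀ ≤ K →
        ∃ f : ℕ → ℝ, f =o[atTop] (fun n : ℕ => (n : ℝ)) ∧
          ∀ n : ℕ,
            (Nat.card {τ : Fin ⌈ε ^ 2 * K / Real.log K⌉₊ → (Fin n → Bool) //
                ∀ j k, j ≠ k →
                  (Real.log K / K - (Real.log K / K) ^ 2) * n ≤ hammingDist (τ j) (τ k) ∧
                  (hammingDist (τ j) (τ k) : ℝ) ≤ (Real.log K / K) * n} : ℝ)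
              ≤ Real.exp ((n : ℝ) * ε ^ 2 * Real.log K
                  + (n : ℝ) * C * Real.log (Real.log K) + f n) := by
  refine ⟨3, fun ε hε0 hε1 => ⟨21, fun K hK => ⟨fun _ => 0, Asymptotics.isLittleO_zero _ _,
    fun n => ?_⟩⟩⟩
  have hK0 : (0:ℝ) < K := by exact_mod_cast (by omega : 0 < K)
  have hK21 : (21:ℝ) ≤ K := by exact_mod_cast hK
  set L := Real.log K with hLdef
  -- exp 1 ≤ L
  have heL : Real.exp 1 ≤ L := by
    rw [hLdef, Real.le_log_iff_exp_le hK0]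
    have h1 : Real.exp (Real.exp 1) ≤ Real.exp 3 :=
      Real.exp_le_exp.2 (le_trans Real.exp_one_lt_d9.le (by norm_num))
    have h2 : Real.exp 3 = (Real.exp 1)^3 := by
      rw [← Real.exp_nat_mul]; norm_num
    have h3 : (Real.exp 1)^3 ≤ (2.7182818286:ℝ)^3 :=
      pow_le_pow_left₀ (Real.exp_pos 1).le Real.exp_one_lt_d9.le 3
    nlinarith
  have hL1 : 1 ≤ L := le_trans (by nlinarith [Real.add_one_le_exp 1]) heL
  have hL0 : 0 < L := lt_of_lt_of_le one_pos hL1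
  have hlogL : 1 ≤ Real.log L := (Real.le_log_iff_exp_le hL0).2 heL
  have hLK : L ≤ K := le_trans (Real.log_le_sub_one_of_pos hK0) (by linarith)
  set b : ℝ := L / K with hbdef
  have hb0 : 0 < b := div_pos hL0 hK0
  have hb1 : b ≤ 1 := (div_le_one hK0).2 hLK
  set m := ⌈ε ^ 2 * K / L⌉₊ with hmdef
  have hm1 : 0 < m := Nat.ceil_pos.2 (by positivity)
  have hk : ((m - 1 : ℕ) : ℝ) ≤ ε ^ 2 * K / L := by
    have : m - 1 < m := by omega
    exact le_of_lt (Nat.lt_ceil.1 (hmdef ▸ this))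
  set t := ⌊b * n⌋₊ with htdef
  have htn : t ≤ n := by
    have : b * n ≤ (n : ℝ) := by nlinarith [Nat.cast_nonneg (α := ℝ) n]
    calc t ≤ ⌊(n:ℝ)⌋₊ := Nat.floor_le_floor this
      _ = n := Nat.floor_natCast n
  have htle : (t : ℝ) ≤ b * n := Nat.floor_le (by positivity)
  -- counting bound
  have hcount := tuple_card_le' n m t hm1
    (fun τ => ∀ j k, j ≠ k →
        (b - b ^ 2) * n ≤ hammingDist (τ j) (τ k) ∧
        (hammingDist (τ j) (τ k) : ℝ) ≤ b * n)
    (by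
      intro τ hτ j
      by_cases hj : j = ⟨0, hm1⟩
      · rw [hj, hammingDist_self]; exact Nat.zero_le t
      · have := (hτ j ⟨0, hm1⟩ hj).2
        exact Nat.le_floor this)
  -- real estimates
  set A : ℝ := ∑ r ∈ Finset.range (t+1), (n.choose r : ℝ) with hAdef
  have hA0 : 0 ≤ A := by positivity
  have hAsum := sum_choose_le' n t b hb0 hb1 htn
  have hlogb : Real.log (1/b) = L - Real.log L := by
    rw [one_div, Real.log_inv, hbdef, Real.log_div hL0.ne' hK0.ne']
    ring
  have hlogb0 : 0 ≤ Real.log (1/b) := by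
    rw [hlogb]
    nlinarith [Real.log_le_sub_one_of_pos hL0]
  have hAle : A ≤ Real.exp (b * n * (Real.log (1/b) + 1)) := by
    have h1 : A ≤ (1 + b)^n * (1/b)^t := by
      rw [ mul_comm]
      have : (1/b)^t * ((A) * b^t) ≤ (1/b)^t * (1+b)^n :=
        mul_le_mul_of_nonneg_left hAsum (by positivity)
      calc A = (1/b)^t * (A * b^t) := by
              field_simp
              rw [mul_assoc, ← mul_pow, one_div_mul_cancel hb0.ne', one_pow, mul_one]
        _ ≤ (1/b)^t * (1+b)^n := this
    have h2 : (1 + b)^n ≤ Real.exp (b * n) := by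
      calc (1+b)^n ≤ (Real.exp b)^n :=
            pow_le_pow_left₀ (by positivity) (by nlinarith [Real.add_one_le_exp b]) n
        _ = Real.exp (n * b) := (Real.exp_nat_mul b n).symm
        _ = Real.exp (b * n) := by ring_nf
    have h3 : ((1:ℝ)/b)^t ≤ Real.exp (b * n * Real.log (1/b)) := by
      have : ((1:ℝ)/b)^t = Real.exp (t * Real.log (1/b)) := by
        rw [Real.exp_nat_mul, Real.exp_log (by positivity)]
      rw [this]
      exact Real.exp_le_exp.2 (mul_le_mul_of_nonneg_right htle hlogb0)
    calc A ≤ (1 + b)^n * (1/b)^t := h1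
      _ ≤ Real.exp (b * n) * Real.exp (b * n * Real.log (1/b)) :=
          mul_le_mul h2 h3 (by positivity) (Real.exp_pos _).le
      _ = Real.exp (b * n * (Real.log (1/b) + 1)) := by
          rw [← Real.exp_add]; ring_nf
  -- put together
  have hmain : (Nat.card {τ : Fin m → (Fin n → Bool) //
      ∀ j k, j ≠ k →
        (b - b ^ 2) * n ≤ hammingDist (τ j) (τ k) ∧
        (hammingDist (τ j) (τ k) : ℝ) ≤ b * n} : ℝ)
      ≤ Real.exp (n * Real.log 2 + (m-1 : ℕ) * (b * n * (Real.log (1/b) + 1))) := by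
    calc (Nat.card _ : ℝ) ≤ ((2 ^ n * (∑ r ∈ Finset.range (t+1), n.choose r) ^ (m - 1) : ℕ) : ℝ) := by
          exact_mod_cast hcount
      _ = (2:ℝ)^n * A^(m-1) := by push_cast [hAdef]; ring
      _ ≤ Real.exp (n * Real.log 2) * Real.exp (b * n * (Real.log (1/b) + 1))^(m-1) := by
          apply mul_le_mul
          · rw [← Real.exp_log (two_pos (α := ℝ)), ← Real.exp_nat_mul, Real.exp_log two_pos]
          · exact pow_le_pow_left₀ hA0 hAle _
          · positivity
          · positivity
      _ = Real.exp (n * Real.log 2 + (m-1 : ℕ) * (b * n * (Real.log (1/b) + 1))) := by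
          rw [← Real.exp_nat_mul, ← Real.exp_add]
  refine le_trans hmain (Real.exp_le_exp.2 ?_)
  -- arithmetic
  rw [hlogb]
  have hε2 : ε^2 ≤ 1 := by nlinarith
  have hεpos : (0:ℝ) < ε^2 := by positivity
  have hlog2 : Real.log 2 ≤ 1 := by
    nlinarith [Real.log_two_lt_d9]
  have hnn : (0:ℝ) ≤ n := Nat.cast_nonneg n
  have hbr : 0 ≤ L - Real.log L + 1 := by nlinarith [Real.log_le_sub_one_of_pos hL0]
  have key : ((m-1:ℕ):ℝ) * (b * (L - Real.log L + 1)) ≤ ε^2 * (L - Real.log L + 1) := by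
    have h1 : ((m-1:ℕ):ℝ) * b ≤ (ε^2 * K / L) * (L / K) :=
      mul_le_mul hk le_rfl hb0.le (by positivity)
    have h2 : (ε^2 * K / L) * (L / K) = ε^2 := by field_simp
    have h3 : ((m-1:ℕ):ℝ) * b ≤ ε^2 := by rw [← h2]; exact h1
    calc ((m-1:ℕ):ℝ) * (b * (L - Real.log L + 1)) = (((m-1:ℕ):ℝ) * b) * (L - Real.log L + 1) := by
          ring
      _ ≤ ε^2 * (L - Real.log L + 1) := mul_le_mul_of_nonneg_right h3 hbr
  have bracket : Real.log 2 + ((m-1:ℕ):ℝ) * (b * (L - Real.log L + 1)) ≤ ε^2 * L + 3 * Real.log L := by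
    nlinarith [key]
  calc (n:ℝ) * Real.log 2 + ((m-1:ℕ):ℝ) * (b * (n:ℝ) * (L - Real.log L + 1))
      = (n:ℝ) * (Real.log 2 + ((m-1:ℕ):ℝ) * (b * (L - Real.log L + 1))) := by ring
    _ ≤ (n:ℝ) * (ε^2 * L + 3 * Real.log L) := mul_le_mul_of_nonneg_left bracket hnn
    _ = (n:ℝ) * ε^2 * L + (n:ℝ) * 3 * Real.log L + 0 := by ring
end

section
/- Fix 0 < ε < 1 and let β = ln K/K, η = (ln K/K)², m = ⌈ε²K/ln K⌉. There exists K₀(ε) such that for all K ≥ K₀ and all d ≥ (1+ε)·2^{K−1}(ln K)²/K, the expected number of m-tuples of satisfying assignments of the random NAE-K-SAT formula Φ(n, dn) with all pairwise Hamming distances in [(β−η)n, βn] is at most exp(−n·ε³·ln K + n·o_K(ln K)), and in particular tends to 0 as n → ∞. -/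
open Real Filter

def naeSat {n K : ℕ} (σ : Fin n → Bool) (C : Clause n K) : Prop :=
  (∃ i, litVal σ C i = true) ∧ (∃ i, litVal σ C i = false)

noncomputable def expectedTuples (K : ℕ) (d ε : ℝ) (n : ℕ) : ℝ :=
  (∑ Φ : Fin ⌊d * n⌋₊ → Clause n K,
      (Nat.card {τ : Fin ⌈ε ^ 2 * K / Real.log K⌉₊ → (Fin n → Bool) //
          (∀ j i, naeSat (τ j) (Φ i)) ∧
          ∀ j k, j ≠ k →
            (Real.log K / K - (Real.log K / K) ^ 2) * n ≤ hammingDist (τ j) (τ k) ∧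
            (hammingDist (τ j) (τ k) : ℝ) ≤ (Real.log K / K) * n} : ℝ))
    / (Fintype.card (Fin ⌊d * n⌋₊ → Clause n K) : ℝ)

/-- distance condition -/
def st7B (K : ℕ) {n m : ℕ} (τ : Fin m → (Fin n → Bool)) : Prop :=
  ∀ j k, j ≠ k →
    (Real.log K / K - (Real.log K / K) ^ 2) * n ≤ hammingDist (τ j) (τ k) ∧
    (hammingDist (τ j) (τ k) : ℝ) ≤ (Real.log K / K) * n

/-- fraction of clauses satisfied by all assignments in the tuple -/
noncomputable def st7q (n K : ℕ) {m : ℕ} (τ : Fin m → (Fin n → Bool)) : ℝ :=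
  (Nat.card {C : Clause n K // ∀ j, naeSat (τ j) C} : ℝ) / (Fintype.card (Clause n K) : ℝ)

lemma st7_ite_forall_prod {ι : Type*} [Fintype ι] (P : ι → Prop) [DecidablePred P] :
    (if (∀ i, P i) then (1:ℝ) else 0) = ∏ i, if P i then (1:ℝ) else 0 := by
  by_cases h : ∀ i, P i
  · rw [if_pos h]
    exact (Finset.prod_eq_one fun i _ => if_pos (h i)).symm
  · rw [if_neg h]
    push_neg at h
    obtain ⟨i, hi⟩ := h
    exact (Finset.prod_eq_zero (Finset.mem_univ i)
      (show (if P i then (1:ℝ) else 0) = 0 from if_neg hi)).symm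

open scoped Classical in
lemma st7_expected_eq (K : ℕ) (d ε : ℝ) (n : ℕ) (hN : 0 < Fintype.card (Clause n K)) :
    expectedTuples K d ε n =
      ∑ τ : Fin ⌈ε ^ 2 * K / Real.log K⌉₊ → (Fin n → Bool),
        (if st7B K τ then (1:ℝ) else 0) * (st7q n K τ) ^ ⌊d * n⌋₊ := by
  set m := ⌈ε ^ 2 * K / Real.log K⌉₊
  set M := ⌊d * n⌋₊
  have h1 : ∀ Φ : Fin M → Clause n K,
      (Nat.card {τ : Fin m → (Fin n → Bool) //
          (∀ j i, naeSat (τ j) (Φ i)) ∧ st7B K τ} : ℝ) =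
      ∑ τ : Fin m → (Fin n → Bool),
        (if st7B K τ then (1:ℝ) else 0) * ∏ i, (if ∀ j, naeSat (τ j) (Φ i) then (1:ℝ) else 0) := by
    intro Φ
    rw [Nat.card_eq_fintype_card, Fintype.card_subtype, Finset.card_filter]
    push_cast
    refine Finset.sum_congr rfl fun τ _ => ?_
    rw [← st7_ite_forall_prod (fun i => ∀ j, naeSat (τ j) (Φ i))]
    by_cases hB : st7B K τ
    · by_cases hA : ∀ j i, naeSat (τ j) (Φ i)
      · rw [if_pos ⟨hA, hB⟩, if_pos hB, if_pos (fun i j => hA j i)]; ring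
      · have hA' : ¬ ∀ i j, naeSat (τ j) (Φ i) := fun h => hA fun j i => h i j
        rw [if_neg (fun h => hA h.1), if_pos hB, if_neg hA']; ring
    · rw [if_neg (fun h => hB h.2), if_neg hB]; ring
  have h2 : expectedTuples K d ε n =
      (∑ τ : Fin m → (Fin n → Bool), (if st7B K τ then (1:ℝ) else 0) *
        (∑ C : Clause n K, if ∀ j, naeSat (τ j) C then (1:ℝ) else 0) ^ M) /
      ((Fintype.card (Clause n K) : ℝ)) ^ M := by
    rw [expectedTuples]
    congr 1
    · show (∑ Φ : Fin M → Clause n K,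
          (Nat.card {τ : Fin m → (Fin n → Bool) //
            (∀ j i, naeSat (τ j) (Φ i)) ∧ st7B K τ} : ℝ)) = _
      rw [Finset.sum_congr rfl fun Φ _ => h1 Φ, Finset.sum_comm]
      refine Finset.sum_congr rfl fun τ _ => ?_
      rw [← Finset.mul_sum]
      congr 1
      rw [Fintype.sum_pow (fun C => if ∀ j, naeSat (τ j) C then (1:ℝ) else 0) M]
    · rw [Fintype.card_fun]
      push_cast
      simp
      rfl
  rw [h2, Finset.sum_div]
  refine Finset.sum_congr rfl fun τ _ => ?_
  rw [mul_div_assoc, ← div_pow]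
  congr 2
  rw [st7q, Nat.card_eq_fintype_card, Fintype.card_subtype, Finset.card_filter]
  push_cast
  rfl


section counts
variable {n K : ℕ} (σ σ' : Fin n → Bool)

lemma st7_bool1 : ∀ a p b : Bool, xor a p = b ↔ p = xor a b := by decide
lemma st7_bool2 : ∀ a a' p b b' : Bool, xor a p = b → xor a' p = b' → xor a a' = xor b b' := by
  decide
lemma st7_bool3 : ∀ a a' b b' : Bool, xor a a' = xor b b' → xor a' (xor a b) = b' := by decide

def st7e1 (b : Bool) : {C : Clause n K // ∀ i, litVal σ C i = b} ≃ (Fin K → Fin n) where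
  toFun C := C.1.1
  invFun v := ⟨(v, fun i => xor (σ (v i)) b), fun i => by
    show xor (σ (v i)) (xor (σ (v i)) b) = b
    cases σ (v i) <;> cases b <;> rfl⟩
  left_inv := by
    rintro ⟨⟨v, p⟩, h⟩
    refine Subtype.ext (Prod.ext rfl (funext fun i => ?_))
    exact (((st7_bool1 _ _ _).1 (h i)).symm : xor (σ (v i)) b = p i)
  right_inv v := rfl

lemma st7_card_allEq (b : Bool) :
    Fintype.card {C : Clause n K // ∀ i, litVal σ C i = b} = n ^ K := by
  rw [Fintype.card_congr (st7e1 σ b), Fintype.card_fun]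
  simp

def st7e2 (b b' : Bool) :
    {C : Clause n K // (∀ i, litVal σ C i = b) ∧ (∀ i, litVal σ' C i = b')} ≃
      (Fin K → {v : Fin n // xor (σ v) (σ' v) = xor b b'}) where
  toFun C i := ⟨C.1.1 i, st7_bool2 _ _ _ _ _ (C.2.1 i) (C.2.2 i)⟩
  invFun v := ⟨((fun i => (v i).1), fun i => xor (σ ((v i).1)) b),
    ⟨fun i => by
      show xor (σ ((v i).1)) (xor (σ ((v i).1)) b) = b
      cases σ ((v i).1) <;> cases b <;> rfl,
     fun i => st7_bool3 _ _ _ _ (v i).2⟩⟩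
  left_inv := by
    rintro ⟨⟨v, p⟩, h1, h2⟩
    refine Subtype.ext (Prod.ext rfl (funext fun i => ?_))
    exact (((st7_bool1 _ _ _).1 (h1 i)).symm : xor (σ (v i)) b = p i)
  right_inv v := funext fun i => Subtype.ext rfl

lemma st7_card_pair (b b' : Bool) :
    Fintype.card {C : Clause n K // (∀ i, litVal σ C i = b) ∧ (∀ i, litVal σ' C i = b')} =
      (Fintype.card {v : Fin n // xor (σ v) (σ' v) = xor b b'}) ^ K := by
  rw [Fintype.card_congr (st7e2 σ σ' b b'), Fintype.card_fun]
  simp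

open scoped Classical in
lemma st7_card_ne :
    Fintype.card {v : Fin n // xor (σ v) (σ' v) = true} = hammingDist σ σ' := by
  rw [Fintype.card_subtype, hammingDist]
  congr 1
  apply Finset.filter_congr
  intro v _
  cases hv : σ v <;> cases hv' : σ' v <;> simp

open scoped Classical in
lemma st7_card_eq' :
    Fintype.card {v : Fin n // xor (σ v) (σ' v) = false} = n - hammingDist σ σ' := by
  have h := Fintype.card_subtype_compl (fun v : Fin n => xor (σ v) (σ' v) = true)
  rw [st7_card_ne σ σ', Fintype.card_fin] at h
  rw [← h]
  apply Fintype.card_congr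
  apply Equiv.subtypeEquivRight
  intro v
  simp

open scoped Classical in
lemma st7_not_naeSat_iff (hK : 1 ≤ K) (C : Clause n K) :
    ¬ naeSat σ C ↔ (∀ i, litVal σ C i = true) ∨ (∀ i, litVal σ C i = false) := by
  rw [naeSat, not_and_or]
  push_neg
  constructor
  · rintro (h | h)
    · exact Or.inr fun i => by simpa using h i
    · exact Or.inl fun i => by simpa using h i
  · rintro (h | h)
    · exact Or.inr fun i => by simp [h i]
    · exact Or.inl fun i => by simp [h i]

open scoped Classical in
lemma st7_sum_ite {α : Type*} [Fintype α] (p : α → Prop) [DecidablePred p] :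
    ∑ a : α, (if p a then (1:ℝ) else 0) = Fintype.card {x // p x} := by
  rw [Fintype.card_subtype, Finset.card_filter]
  push_cast
  rfl

open scoped Classical in
lemma st7_badcount (hK : 1 ≤ K) :
    ∑ C : Clause n K, (if ¬ naeSat σ C then (1:ℝ) else 0) = 2 * (n : ℝ) ^ K := by
  have key : ∀ C : Clause n K, (if ¬ naeSat σ C then (1:ℝ) else 0) =
      (if (∀ i, litVal σ C i = true) then (1:ℝ) else 0) +
      (if (∀ i, litVal σ C i = false) then (1:ℝ) else 0) := by
    intro C
    by_cases h : ¬ naeSat σ C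
    · rcases (st7_not_naeSat_iff σ hK C).1 h with h1 | h1
      · have h2 : ¬ (∀ i, litVal σ C i = false) := fun h2 => by
          simpa [h1 ⟨0, hK⟩] using h2 ⟨0, hK⟩
        rw [if_pos h, if_pos h1, if_neg h2]; ring
      · have h2 : ¬ (∀ i, litVal σ C i = true) := fun h2 => by
          simpa [h1 ⟨0, hK⟩] using h2 ⟨0, hK⟩
        rw [if_pos h, if_pos h1, if_neg h2]; ring
    · have h1 : ¬ (∀ i, litVal σ C i = true) := fun h1 =>
        h ((st7_not_naeSat_iff σ hK C).2 (Or.inl h1))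
      have h2 : ¬ (∀ i, litVal σ C i = false) := fun h2 =>
        h ((st7_not_naeSat_iff σ hK C).2 (Or.inr h2))
      rw [if_neg h, if_neg h1, if_neg h2]; ring
  rw [Finset.sum_congr rfl fun C _ => key C, Finset.sum_add_distrib,
    st7_sum_ite, st7_sum_ite, st7_card_allEq, st7_card_allEq]
  push_cast
  ring

end counts


section pair
variable {n K : ℕ} (σ σ' : Fin n → Bool)

lemma st7_ite_mul (P Q : Prop) [Decidable P] [Decidable Q] :
    (if P then (1:ℝ) else 0) * (if Q then 1 else 0) = if P ∧ Q then 1 else 0 := by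
  by_cases hP : P <;> by_cases hQ : Q <;> simp [hP, hQ]

open scoped Classical in
lemma st7_ite_not_eq (hK : 1 ≤ K) (C : Clause n K) :
    (if ¬ naeSat σ C then (1:ℝ) else 0) =
      (if (∀ i, litVal σ C i = true) then (1:ℝ) else 0) +
      (if (∀ i, litVal σ C i = false) then (1:ℝ) else 0) := by
  by_cases h : ¬ naeSat σ C
  · rcases (st7_not_naeSat_iff σ hK C).1 h with h1 | h1
    · have h2 : ¬ (∀ i, litVal σ C i = false) := fun h2 => by
        simpa [h1 ⟨0, hK⟩] using h2 ⟨0, hK⟩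
      rw [if_pos h, if_pos h1, if_neg h2]; ring
    · have h2 : ¬ (∀ i, litVal σ C i = true) := fun h2 => by
        simpa [h1 ⟨0, hK⟩] using h2 ⟨0, hK⟩
      rw [if_pos h, if_pos h1, if_neg h2]; ring
  · have h1 : ¬ (∀ i, litVal σ C i = true) := fun h1 =>
      h ((st7_not_naeSat_iff σ hK C).2 (Or.inl h1))
    have h2 : ¬ (∀ i, litVal σ C i = false) := fun h2 =>
      h ((st7_not_naeSat_iff σ hK C).2 (Or.inr h2))
    rw [if_neg h, if_neg h1, if_neg h2]; ring

open scoped Classical in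
lemma st7_paircount (hK : 1 ≤ K) :
    ∑ C : Clause n K,
        (if ¬ naeSat σ C then (1:ℝ) else 0) * (if ¬ naeSat σ' C then (1:ℝ) else 0) =
      2 * (((n - hammingDist σ σ' : ℕ) : ℝ)) ^ K + 2 * ((hammingDist σ σ' : ℕ) : ℝ) ^ K := by
  have key : ∀ C : Clause n K,
      (if ¬ naeSat σ C then (1:ℝ) else 0) * (if ¬ naeSat σ' C then (1:ℝ) else 0) =
      (if ((∀ i, litVal σ C i = true) ∧ (∀ i, litVal σ' C i = true)) then (1:ℝ) else 0) +
      (if ((∀ i, litVal σ C i = true) ∧ (∀ i, litVal σ' C i = false)) then (1:ℝ) else 0) +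
      (if ((∀ i, litVal σ C i = false) ∧ (∀ i, litVal σ' C i = true)) then (1:ℝ) else 0) +
      (if ((∀ i, litVal σ C i = false) ∧ (∀ i, litVal σ' C i = false)) then (1:ℝ) else 0) := by
    intro C
    rw [st7_ite_not_eq σ hK C, st7_ite_not_eq σ' hK C]
    rw [add_mul, mul_add, mul_add, st7_ite_mul, st7_ite_mul, st7_ite_mul, st7_ite_mul]
    ring
  rw [Finset.sum_congr rfl fun C _ => key C]
  rw [Finset.sum_add_distrib, Finset.sum_add_distrib, Finset.sum_add_distrib]
  rw [st7_sum_ite, st7_sum_ite, st7_sum_ite, st7_sum_ite,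
    st7_card_pair, st7_card_pair, st7_card_pair, st7_card_pair]
  have htt : (xor true true) = false := rfl
  have hff : (xor false false) = false := rfl
  have htf : (xor true false) = true := rfl
  have hft : (xor false true) = true := rfl
  rw [htt, hff, htf, hft, st7_card_ne, st7_card_eq']
  push_cast
  ring

open scoped Classical in
lemma st7_pointwise {m : ℕ} (f : Fin m → ℝ) (hf : ∀ j, f j = 0 ∨ f j = 1) (P : Prop)
    [Decidable P] (hP : P → ∀ j, f j = 0) :
    (if P then (1:ℝ) else 0) ≤
      1 - (∑ j, f j) + ∑ j, ∑ k ∈ Finset.univ.erase j, f j * f k := by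
  have hsq : ∑ j, ∑ k ∈ Finset.univ.erase j, f j * f k = (∑ j, f j)^2 - ∑ j, f j := by
    have h1 : ∀ j : Fin m, ∑ k ∈ Finset.univ.erase j, f j * f k
        = (∑ k, f j * f k) - f j * f j := fun j =>
      Finset.sum_erase_eq_sub (Finset.mem_univ j)
    rw [Finset.sum_congr rfl fun j _ => h1 j, Finset.sum_sub_distrib]
    have h2 : ∀ j, f j * f j = f j := fun j => by rcases hf j with h | h <;> rw [h] <;> ring
    have h3 : ∑ j, f j * f j = ∑ j, f j := Finset.sum_congr rfl fun j _ => h2 j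
    rw [h3]
    congr 1
    rw [sq, Finset.sum_mul]
    exact Finset.sum_congr rfl fun j _ => (Finset.mul_sum _ _ _).symm
  rw [hsq]
  have hrhs : 1 - (∑ j, f j) + ((∑ j, f j)^2 - ∑ j, f j) = (1 - ∑ j, f j)^2 := by ring
  rw [hrhs]
  by_cases hp : P
  · rw [if_pos hp]
    have : ∑ j, f j = 0 := Finset.sum_eq_zero fun j _ => hP hp j
    rw [this]; norm_num
  · rw [if_neg hp]
    positivity

open scoped Classical in
lemma st7_satcount_le {m : ℕ} (hK : 1 ≤ K) (τ : Fin m → (Fin n → Bool)) :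
    (∑ C : Clause n K, if (∀ j, naeSat (τ j) C) then (1:ℝ) else 0)
      ≤ (n:ℝ) ^ K * 2 ^ K - m * (2 * (n:ℝ) ^ K) +
        ∑ j : Fin m, ∑ k ∈ Finset.univ.erase j,
          (2 * (((n - hammingDist (τ j) (τ k) : ℕ)) : ℝ) ^ K
            + 2 * ((hammingDist (τ j) (τ k) : ℕ) : ℝ) ^ K) := by
  have step1 : (∑ C : Clause n K, if (∀ j, naeSat (τ j) C) then (1:ℝ) else 0)
      ≤ ∑ C : Clause n K, (1 - (∑ j, if ¬ naeSat (τ j) C then (1:ℝ) else 0)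
          + ∑ j : Fin m, ∑ k ∈ Finset.univ.erase j,
            (if ¬ naeSat (τ j) C then (1:ℝ) else 0) * (if ¬ naeSat (τ k) C then (1:ℝ) else 0)) := by
    refine Finset.sum_le_sum fun C _ => ?_
    refine st7_pointwise _ (fun j => ?_) _ (fun h j => if_neg (by simpa using h j))
    by_cases h : ¬ naeSat (τ j) C
    · right; rw [if_pos h]
    · left; rw [if_neg h]
  refine step1.trans ?_
  rw [Finset.sum_add_distrib, Finset.sum_sub_distrib]
  have e0 : ∑ _C : Clause n K, (1:ℝ) = (n:ℝ) ^ K * 2 ^ K := by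
    rw [Finset.sum_const, Finset.card_univ]
    have : Fintype.card (Clause n K) = n ^ K * 2 ^ K := by
      rw [Fintype.card_prod, Fintype.card_fun, Fintype.card_fun]
      simp
    rw [this]
    push_cast
    ring
  have e1 : ∑ C : Clause n K, (∑ j : Fin m, if ¬ naeSat (τ j) C then (1:ℝ) else 0)
      = m * (2 * (n:ℝ) ^ K) := by
    rw [Finset.sum_comm]
    rw [Finset.sum_congr rfl fun j _ => st7_badcount (τ j) hK]
    rw [Finset.sum_const, Finset.card_univ, Fintype.card_fin, nsmul_eq_mul]
  have e2 : ∑ C : Clause n K, (∑ j : Fin m, ∑ k ∈ Finset.univ.erase j,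
        (if ¬ naeSat (τ j) C then (1:ℝ) else 0) * (if ¬ naeSat (τ k) C then (1:ℝ) else 0))
      = ∑ j : Fin m, ∑ k ∈ Finset.univ.erase j,
          (2 * (((n - hammingDist (τ j) (τ k) : ℕ)) : ℝ) ^ K
            + 2 * ((hammingDist (τ j) (τ k) : ℕ) : ℝ) ^ K) := by
    rw [Finset.sum_comm]
    refine Finset.sum_congr rfl fun j _ => ?_
    rw [Finset.sum_comm]
    exact Finset.sum_congr rfl fun k _ => st7_paircount (τ j) (τ k) hK
  rw [e0, e1, e2]

end pair

section count

lemma st7_bool_ne {a b c : Bool} : a ≠ c → b ≠ c → a = b := by revert a b c; decide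

open scoped Classical in
lemma st7_filter_card {n : ℕ} (σ σ' : Fin n → Bool) :
    (Finset.univ.filter (fun x => σ x ≠ σ' x)).card = hammingDist σ σ' := by
  rw [hammingDist]

lemma st7_card_small_sets {n k : ℕ} :
    Fintype.card {s : Finset (Fin n) // s.card ≤ k} =
      ∑ j ∈ Finset.range (k+1), n.choose j := by
  classical
  rw [Fintype.card_subtype]
  have he : Finset.univ.filter (fun s : Finset (Fin n) => s.card ≤ k) =
      (Finset.range (k+1)).biUnion (fun j => Finset.powersetCard j Finset.univ) := by
    ext s
    simp only [Finset.mem_filter, Finset.mem_univ, true_and, Finset.mem_biUnion,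
      Finset.mem_range, Finset.mem_powersetCard]
    constructor
    · intro h; exact ⟨s.card, Nat.lt_succ_of_le h, Finset.subset_univ s, rfl⟩
    · rintro ⟨j, hj, -, rfl⟩; exact Nat.lt_succ_iff.1 hj
  rw [he, Finset.card_biUnion]
  · refine Finset.sum_congr rfl fun j _ => ?_
    rw [Finset.card_powersetCard, Finset.card_univ, Fintype.card_fin]
  · intro a _ b _ hab
    refine Finset.disjoint_left.2 fun s hsa hsb => hab ?_
    rw [Finset.mem_powersetCard] at hsa hsb
    rw [← hsa.2, ← hsb.2]

open scoped Classical in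
lemma st7_count_le {n m K : ℕ} (k : ℕ) (j0 : Fin m)
    (hk : ∀ τ : Fin m → (Fin n → Bool), st7B K τ → ∀ j, hammingDist (τ j0) (τ j) ≤ k) :
    (∑ τ : Fin m → (Fin n → Bool), if st7B K τ then (1:ℝ) else 0)
      ≤ 2 ^ n * ((∑ j ∈ Finset.range (k+1), (n.choose j : ℝ)) ^ m) := by
  rw [st7_sum_ite]
  have hinj : Fintype.card {τ : Fin m → (Fin n → Bool) // st7B K τ} ≤
      Fintype.card ((Fin n → Bool) × (Fin m → {s : Finset (Fin n) // s.card ≤ k})) := by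
    refine Fintype.card_le_of_injective
      (fun τ => (τ.1 j0, fun j => ⟨Finset.univ.filter (fun x => τ.1 j0 x ≠ τ.1 j x), by
        rw [st7_filter_card]; exact hk τ.1 τ.2 j⟩)) ?_
    rintro ⟨τ, hτ⟩ ⟨τ', hτ'⟩ hEq
    simp only [Prod.mk.injEq, Subtype.mk.injEq, funext_iff] at hEq
    obtain ⟨h0, hs⟩ := hEq
    refine Subtype.ext (funext fun j => funext fun x => ?_)
    have hsx := Finset.ext_iff.1 (hs j) x
    simp only [Finset.mem_filter, Finset.mem_univ, true_and] at hsx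
    have h0x : τ j0 x = τ' j0 x := h0 x
    show τ j x = τ' j x
    by_cases hb : τ j0 x = τ j x
    · have h2 : ¬ (τ' j0 x ≠ τ' j x) := fun hc => (hsx.2 hc) hb
      push_neg at h2
      rw [← hb, h0x, h2]
    · have h1 : τ j x ≠ τ j0 x := fun hc => hb hc.symm
      have h2 : τ' j0 x ≠ τ' j x := hsx.1 (fun hc => hb hc)
      have h2' : τ' j x ≠ τ j0 x := by rw [← h0x] at h2; exact fun hc => h2 hc.symm
      exact st7_bool_ne h1 h2'
  have hcard : (Fintype.card ((Fin n → Bool) × (Fin m → {s : Finset (Fin n) // s.card ≤ k})) : ℝ)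
      = 2 ^ n * ((∑ j ∈ Finset.range (k+1), (n.choose j : ℝ)) ^ m) := by
    rw [Fintype.card_prod, Fintype.card_fun, Fintype.card_fun, st7_card_small_sets]
    push_cast
    simp
  calc (Fintype.card {τ : Fin m → (Fin n → Bool) // st7B K τ} : ℝ)
      ≤ (Fintype.card ((Fin n → Bool) × (Fin m → {s : Finset (Fin n) // s.card ≤ k})) : ℝ) := by
        exact_mod_cast hinj
    _ = _ := hcard

lemma st7_binom_le {n k : ℕ} {β : ℝ} (hβ0 : 0 < β) (hβ1 : β ≤ 1) (hk : (k:ℝ) ≤ β * n) :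
    (∑ j ∈ Finset.range (k+1), (n.choose j : ℝ)) ≤ Real.exp (β * n * (Real.log (1/β) + 1)) := by
  have hkn : k ≤ n := by
    have : (k : ℝ) ≤ n := hk.trans (by nlinarith)
    exact_mod_cast this
  have h1 : β ^ k * (∑ j ∈ Finset.range (k+1), (n.choose j : ℝ)) ≤ (1+β) ^ n := by
    rw [Finset.mul_sum]
    calc ∑ j ∈ Finset.range (k+1), β ^ k * (n.choose j : ℝ)
        ≤ ∑ j ∈ Finset.range (k+1), β ^ j * (n.choose j : ℝ) := by
          refine Finset.sum_le_sum fun j hj => ?_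
          have hj' : j ≤ k := Nat.lt_succ_iff.1 (Finset.mem_range.1 hj)
          exact mul_le_mul_of_nonneg_right
            (pow_le_pow_of_le_one hβ0.le hβ1 hj') (by positivity)
      _ ≤ ∑ j ∈ Finset.range (n+1), β ^ j * (n.choose j : ℝ) := by
          refine Finset.sum_le_sum_of_subset_of_nonneg
            (Finset.range_subset_range.2 (by omega)) fun j _ _ => by positivity
      _ = (β + 1) ^ n := by
          rw [add_pow]
          exact Finset.sum_congr rfl fun j _ => by rw [one_pow]; ring
      _ = (1 + β) ^ n := by ring
  have hβk : (0:ℝ) < β ^ k := by positivity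
  have h2 : (∑ j ∈ Finset.range (k+1), (n.choose j : ℝ)) ≤ (1+β) ^ n * (1/β) ^ k := by
    rw [← le_div_iff₀' hβk] at h1
    calc (∑ j ∈ Finset.range (k+1), (n.choose j : ℝ)) ≤ (1+β)^n / β^k := h1
      _ = (1+β)^n * (1/β)^k := by rw [div_pow, one_pow]; ring
  refine h2.trans ?_
  have h3 : (1+β) ^ n ≤ Real.exp (β * n) := by
    calc (1+β) ^ n ≤ (Real.exp β) ^ n :=
          pow_le_pow_left₀ (by positivity) (by linarith [Real.add_one_le_exp β]) n
      _ = Real.exp (β * n) := by rw [← Real.exp_nat_mul]; ring_nf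
  have h4 : (1/β) ^ k ≤ Real.exp (β * n * Real.log (1/β)) := by
    have hlog : 0 ≤ Real.log (1/β) := by
      apply Real.log_nonneg
      rw [le_div_iff₀ hβ0]; linarith
    calc (1/β) ^ k = Real.exp (Real.log (1/β)) ^ k := by
          rw [Real.exp_log (by positivity)]
      _ = Real.exp (k * Real.log (1/β)) := by rw [← Real.exp_nat_mul]
      _ ≤ Real.exp (β * n * Real.log (1/β)) := by
          apply Real.exp_le_exp.2
          exact mul_le_mul_of_nonneg_right hk hlog
  calc (1+β)^n * (1/β)^k ≤ Real.exp (β * n) * Real.exp (β * n * Real.log (1/β)) := by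
        apply mul_le_mul h3 h4 (by positivity) (Real.exp_pos _).le
    _ = Real.exp (β * n * (Real.log (1/β) + 1)) := by rw [← Real.exp_add]; ring_nf

end count

section qbound
open scoped Classical

lemma st7_q_le {n K m : ℕ} (hn : 1 ≤ n) (hK : 1 ≤ K)
    (τ : Fin m → (Fin n → Bool)) (hτ : st7B K τ) :
    st7q n K τ ≤ 1 - (2*(m:ℝ) - 2*(m:ℝ)^2 *
      ((1 - Real.log K / K + (Real.log K / K)^2)^K + (Real.log K / K)^K)) / 2^K := by
  set b := Real.log K / K with hb
  set W := (1 - b + b^2)^K + b^K with hW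
  have hK1 : (1:ℝ) ≤ (K:ℝ) := by exact_mod_cast hK
  have hb0 : 0 ≤ b := div_nonneg (Real.log_nonneg hK1) (by linarith)
  have hn0 : (0:ℝ) < (n:ℝ) := by exact_mod_cast hn
  have hpair : ∀ j k : Fin m, j ≠ k →
      2 * (((n - hammingDist (τ j) (τ k) : ℕ)) : ℝ) ^ K
          + 2 * ((hammingDist (τ j) (τ k) : ℕ) : ℝ) ^ K
        ≤ (n:ℝ)^K * (2 * W) := by
    intro j k hjk
    obtain ⟨hD1, hD2⟩ := hτ j k hjk
    set D := hammingDist (τ j) (τ k) with hD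
    have hDn : D ≤ n := hammingDist_le_card_fintype.trans_eq (Fintype.card_fin n)
    have hcast : ((n - D : ℕ) : ℝ) = (n:ℝ) - (D:ℝ) := by
      exact Nat.cast_sub hDn
    have h1 : ((n - D : ℕ) : ℝ) ≤ (n:ℝ) * (1 - b + b^2) := by
      rw [hcast]; nlinarith [hD1]
    have h3 : ((n - D : ℕ):ℝ)^K ≤ ((n:ℝ)*(1-b+b^2))^K :=
      pow_le_pow_left₀ (Nat.cast_nonneg _) h1 K
    have h4 : ((D : ℕ):ℝ)^K ≤ ((n:ℝ)*b)^K :=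
      pow_le_pow_left₀ (Nat.cast_nonneg _) (by nlinarith [hD2]) K
    calc 2 * (((n - D : ℕ)) : ℝ) ^ K + 2 * ((D : ℕ) : ℝ) ^ K
        ≤ 2 * ((n:ℝ)*(1-b+b^2))^K + 2 * ((n:ℝ)*b)^K := by linarith
      _ = (n:ℝ)^K * (2 * W) := by rw [hW, mul_pow, mul_pow]; ring
  have hWpos : 0 ≤ (n:ℝ)^K * (2*W) := by
    have hW0 : (0:ℝ) ≤ W := by
      have h5 : (0:ℝ) ≤ (1 - b + b^2) := by nlinarith
      positivity
    positivity
  have hsum := st7_satcount_le hK τ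
  have hsum2 : (∑ j : Fin m, ∑ k ∈ Finset.univ.erase j,
        (2 * (((n - hammingDist (τ j) (τ k) : ℕ)) : ℝ) ^ K
          + 2 * ((hammingDist (τ j) (τ k) : ℕ) : ℝ) ^ K))
      ≤ (m:ℝ) * ((m:ℝ) * ((n:ℝ)^K * (2*W))) := by
    calc (∑ j : Fin m, ∑ k ∈ Finset.univ.erase j,
          (2 * (((n - hammingDist (τ j) (τ k) : ℕ)) : ℝ) ^ K
            + 2 * ((hammingDist (τ j) (τ k) : ℕ) : ℝ) ^ K))
        ≤ ∑ j : Fin m, ∑ _k ∈ (Finset.univ : Finset (Fin m)).erase j, (n:ℝ)^K * (2*W) := by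
          refine Finset.sum_le_sum fun j _ => Finset.sum_le_sum fun k hk => ?_
          exact hpair j k (Finset.mem_erase.1 hk).1.symm
      _ = ∑ j : Fin m, ((Finset.univ.erase j).card : ℝ) * ((n:ℝ)^K * (2*W)) := by
          refine Finset.sum_congr rfl fun j _ => ?_
          rw [Finset.sum_const, nsmul_eq_mul]
      _ ≤ ∑ _j : Fin m, (m:ℝ) * ((n:ℝ)^K * (2*W)) := by
          refine Finset.sum_le_sum fun j _ => ?_
          refine mul_le_mul_of_nonneg_right ?_ hWpos
          have hce : (Finset.univ.erase j).card ≤ m :=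
            le_trans Finset.card_erase_le (by simp)
          exact_mod_cast hce
      _ = (m:ℝ) * ((m:ℝ) * ((n:ℝ)^K * (2*W))) := by
          rw [Finset.sum_const, Finset.card_univ, Fintype.card_fin, nsmul_eq_mul]
  have hfinal : (∑ C : Clause n K, if (∀ j, naeSat (τ j) C) then (1:ℝ) else 0)
      ≤ (n:ℝ)^K * 2^K - (m:ℝ) * (2*(n:ℝ)^K) + (m:ℝ)^2 * ((n:ℝ)^K * (2*W)) := by
    have hm2 : (m:ℝ)^2 * ((n:ℝ)^K*(2*W)) = (m:ℝ)*((m:ℝ)*((n:ℝ)^K*(2*W))) := by ring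
    rw [hm2]
    linarith [hsum, hsum2]
  have hNpos : (0:ℝ) < (n:ℝ)^K * 2^K := by positivity
  have hqeq : st7q n K τ =
      (∑ C : Clause n K, if (∀ j, naeSat (τ j) C) then (1:ℝ) else 0) / ((n:ℝ)^K * 2^K) := by
    rw [st7q, st7_sum_ite, Nat.card_eq_fintype_card]
    congr 1
    rw [Fintype.card_prod, Fintype.card_fun, Fintype.card_fun]
    push_cast
    simp
  rw [hqeq, div_le_iff₀ hNpos]
  have hexpand : (1 - (2*(m:ℝ) - 2*(m:ℝ)^2 * W) / 2^K) * ((n:ℝ)^K * 2^K)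
      = (n:ℝ)^K * 2^K - (m:ℝ)*(2*(n:ℝ)^K) + (m:ℝ)^2 * ((n:ℝ)^K*(2*W)) := by
    field_simp
    ring
  rw [hexpand]
  exact hfinal

lemma st7_q_nonneg {n K m : ℕ} (τ : Fin m → (Fin n → Bool)) : 0 ≤ st7q n K τ := by
  rw [st7q]
  positivity

end qbound

section master
open scoped Classical

lemma st7_nonneg (K : ℕ) (d ε : ℝ) (n : ℕ) : 0 ≤ expectedTuples K d ε n := by
  rw [expectedTuples]
  have h1 : (0:ℝ) ≤ ∑ Φ : Fin ⌊d * n⌋₊ → Clause n K,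
      (Nat.card {τ : Fin ⌈ε ^ 2 * K / Real.log K⌉₊ → (Fin n → Bool) //
          (∀ j i, naeSat (τ j) (Φ i)) ∧
          ∀ j k, j ≠ k →
            (Real.log K / K - (Real.log K / K) ^ 2) * n ≤ hammingDist (τ j) (τ k) ∧
            (hammingDist (τ j) (τ k) : ℝ) ≤ (Real.log K / K) * n} : ℝ) :=
    Finset.sum_nonneg fun Φ _ => Nat.cast_nonneg _
  positivity

lemma st7_zero (K : ℕ) (d ε : ℝ) : expectedTuples K d ε 0 ≤ 1 := by
  rw [expectedTuples]
  have hterm : ∀ Φ : Fin ⌊d * ((0:ℕ):ℝ)⌋₊ → Clause 0 K,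
      (Nat.card {τ : Fin ⌈ε ^ 2 * K / Real.log K⌉₊ → (Fin 0 → Bool) //
          (∀ j i, naeSat (τ j) (Φ i)) ∧
          ∀ j k, j ≠ k →
            (Real.log K / K - (Real.log K / K) ^ 2) * ((0:ℕ):ℝ) ≤ hammingDist (τ j) (τ k) ∧
            (hammingDist (τ j) (τ k) : ℝ) ≤ (Real.log K / K) * ((0:ℕ):ℝ)} : ℝ) ≤ 1 := by
    intro Φ
    have h1 : Nat.card {τ : Fin ⌈ε ^ 2 * K / Real.log K⌉₊ → (Fin 0 → Bool) //
          (∀ j i, naeSat (τ j) (Φ i)) ∧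
          ∀ j k, j ≠ k →
            (Real.log K / K - (Real.log K / K) ^ 2) * ((0:ℕ):ℝ) ≤ hammingDist (τ j) (τ k) ∧
            (hammingDist (τ j) (τ k) : ℝ) ≤ (Real.log K / K) * ((0:ℕ):ℝ)}
        ≤ Nat.card (Fin ⌈ε ^ 2 * K / Real.log K⌉₊ → (Fin 0 → Bool)) :=
      Nat.card_le_card_of_injective _ Subtype.val_injective
    have h2 : Nat.card (Fin ⌈ε ^ 2 * K / Real.log K⌉₊ → (Fin 0 → Bool)) = 1 := by
      rw [Nat.card_eq_fintype_card, Fintype.card_fun]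
      simp
    rw [h2] at h1
    exact_mod_cast h1
  have hnum : (∑ Φ : Fin ⌊d * ((0:ℕ):ℝ)⌋₊ → Clause 0 K,
      (Nat.card {τ : Fin ⌈ε ^ 2 * K / Real.log K⌉₊ → (Fin 0 → Bool) //
          (∀ j i, naeSat (τ j) (Φ i)) ∧
          ∀ j k, j ≠ k →
            (Real.log K / K - (Real.log K / K) ^ 2) * ((0:ℕ):ℝ) ≤ hammingDist (τ j) (τ k) ∧
            (hammingDist (τ j) (τ k) : ℝ) ≤ (Real.log K / K) * ((0:ℕ):ℝ)} : ℝ))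
      ≤ (Fintype.card (Fin ⌊d * ((0:ℕ):ℝ)⌋₊ → Clause 0 K) : ℝ) := by
    calc (∑ Φ : Fin ⌊d * ((0:ℕ):ℝ)⌋₊ → Clause 0 K, (Nat.card _ : ℝ))
        ≤ ∑ _Φ : Fin ⌊d * ((0:ℕ):ℝ)⌋₊ → Clause 0 K, (1:ℝ) :=
          Finset.sum_le_sum fun Φ _ => hterm Φ
      _ = (Fintype.card (Fin ⌊d * ((0:ℕ):ℝ)⌋₊ → Clause 0 K) : ℝ) := by
          rw [Finset.sum_const, Finset.card_univ, nsmul_eq_mul, mul_one]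
  rcases Nat.eq_zero_or_pos (Fintype.card (Fin ⌊d * ((0:ℕ):ℝ)⌋₊ → Clause 0 K)) with h0 | hpos
  · rw [Fintype.card_eq_zero_iff] at h0
    rw [Finset.univ_eq_empty, Finset.sum_empty]
    norm_num
  · rw [div_le_one (by exact_mod_cast hpos)]
    exact hnum

lemma st7_master {K n : ℕ} (d ε : ℝ) (hn : 1 ≤ n) (hK : 1 ≤ K)
    (hm1 : 1 ≤ ⌈ε ^ 2 * K / Real.log K⌉₊)
    (hb0 : 0 < Real.log K / K) (hb1 : Real.log K / K ≤ 1) :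
    expectedTuples K d ε n ≤
      Real.exp ((n:ℝ) * Real.log 2
        + (⌈ε ^ 2 * K / Real.log K⌉₊ : ℝ) * (Real.log K / K * n) * (Real.log (1/(Real.log K / K)) + 1)
        - ((2 * (⌈ε ^ 2 * K / Real.log K⌉₊ : ℝ) - 2 * (⌈ε ^ 2 * K / Real.log K⌉₊ : ℝ)^2 *
            ((1 - Real.log K / K + (Real.log K / K)^2)^K + (Real.log K / K)^K)) / 2^K)
          * (⌊d * (n:ℝ)⌋₊ : ℝ)) := by
  set m := ⌈ε ^ 2 * K / Real.log K⌉₊ with hm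
  set b := Real.log K / K with hb
  set W := (1 - b + b^2)^K + b^K with hW
  set c := (2 * (m:ℝ) - 2 * (m:ℝ)^2 * W) / 2^K with hc
  set M := ⌊d * (n:ℝ)⌋₊ with hM
  have hNclause : 0 < Fintype.card (Clause n K) := by
    have : Nonempty (Clause n K) := ⟨(fun _ => ⟨0, hn⟩, fun _ => true)⟩
    exact Fintype.card_pos
  rw [st7_expected_eq K d ε n hNclause]
  set k := ⌊b * (n:ℝ)⌋₊ with hk
  have j0 : Fin m := ⟨0, hm1⟩
  have hbn0 : 0 ≤ b * (n:ℝ) := by positivity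
  have step1 : (∑ τ : Fin m → (Fin n → Bool), (if st7B K τ then (1:ℝ) else 0) * (st7q n K τ) ^ M)
      ≤ ∑ τ : Fin m → (Fin n → Bool), (if st7B K τ then (1:ℝ) else 0) * Real.exp (-c * M) := by
    refine Finset.sum_le_sum fun τ _ => ?_
    by_cases hτ : st7B K τ
    · rw [if_pos hτ, one_mul, one_mul]
      have h1c : st7q n K τ ≤ 1 - c := by
        have h := st7_q_le hn hK τ hτ
        rw [← hb, ← hW, ← hc] at h
        exact h
      have h0c : (0:ℝ) ≤ 1 - c := le_trans (st7_q_nonneg τ) h1c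
      calc (st7q n K τ) ^ M ≤ (1 - c) ^ M := pow_le_pow_left₀ (st7_q_nonneg τ) h1c M
        _ ≤ (Real.exp (-c)) ^ M := by
            refine pow_le_pow_left₀ h0c ?_ M
            linarith [Real.add_one_le_exp (-c)]
        _ = Real.exp (-c * M) := by
            rw [← Real.exp_nat_mul]
            ring_nf
    · rw [if_neg hτ, zero_mul, zero_mul]
  refine step1.trans ?_
  have hk' : ∀ τ : Fin m → (Fin n → Bool), st7B K τ → ∀ j, hammingDist (τ j0) (τ j) ≤ k := by
    intro τ hτ j
    by_cases hj : j = j0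
    · rw [hj, hammingDist_self]
      exact Nat.zero_le _
    · have h := (hτ j0 j (fun h => hj h.symm)).2
      rw [← hb] at h
      exact Nat.le_floor h
  have hcount := st7_count_le k j0 hk'
  have hbinom := st7_binom_le (n := n) (k := k) hb0 hb1 (Nat.floor_le hbn0)
  have hpow : (∑ j ∈ Finset.range (k+1), (n.choose j : ℝ))^m
      ≤ (Real.exp (b * n * (Real.log (1/b) + 1)))^m :=
    pow_le_pow_left₀ (by positivity) hbinom m
  rw [← Finset.sum_mul]
  calc (∑ τ : Fin m → (Fin n → Bool), if st7B K τ then (1:ℝ) else 0) * Real.exp (-c * M)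
      ≤ (2^n * (Real.exp (b * n * (Real.log (1/b) + 1)))^m) * Real.exp (-c * M) := by
        refine mul_le_mul_of_nonneg_right ?_ (Real.exp_pos _).le
        refine hcount.trans ?_
        exact mul_le_mul_of_nonneg_left hpow (by positivity)
    _ = Real.exp ((n:ℝ) * Real.log 2 + (m:ℝ) * (b * n) * (Real.log (1/b) + 1) - c * M) := by
        have h2n : (2:ℝ)^n = Real.exp ((n:ℝ) * Real.log 2) := by
          rw [Real.exp_nat_mul, Real.exp_log]
          norm_num
        rw [h2n, ← Real.exp_nat_mul, ← Real.exp_add, ← Real.exp_add]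
        congr 1
        ring

end master

set_option maxHeartbeats 1600000 in
/-- For `K` large and `d ≥ (1+ε)2^{K-1}(ln K)²/K`, the expected number of such m-tuples of
satisfying assignments is at most `exp(-nε³ ln K + n o_K(ln K))`, and in particular → 0. -/
theorem stmt7 (ε : ℝ) (hε0 : 0 < ε) (hε1 : ε < 1) :
    ∃ g : ℕ → ℝ, g =o[atTop] (fun K : ℕ => Real.log K) ∧
      ∃ K₀ : ℕ, ∀ K : ℕ, K₀ ≤ K →
        ∀ d : ℝ, (1 + ε) * 2 ^ (K - 1) * (Real.log K) ^ 2 / K ≤ d →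
          (∀ n : ℕ, expectedTuples K d ε n
              ≤ Real.exp (-(n : ℝ) * ε ^ 3 * Real.log K + (n : ℝ) * g K)) ∧
          Tendsto (fun n : ℕ => expectedTuples K d ε n) atTop (nhds 0) := by
  have hlogT : Tendsto (fun K : ℕ => Real.log K) atTop atTop :=
    Real.tendsto_log_atTop.comp tendsto_natCast_atTop_atTop
  have hb_to : Tendsto (fun K : ℕ => Real.log K / K) atTop (nhds 0) := by
    have h := (Real.tendsto_pow_log_div_mul_add_atTop 1 0 1 one_ne_zero).comp
      tendsto_natCast_atTop_atTop
    simpa [Function.comp_def] using h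
  have hb2_to : Tendsto (fun K : ℕ => (Real.log K)^2 / K) atTop (nhds 0) := by
    have h := (Real.tendsto_pow_log_div_mul_add_atTop 1 0 2 one_ne_zero).comp
      tendsto_natCast_atTop_atTop
    simpa [Function.comp_def] using h
  have hgeo1 : Tendsto (fun K : ℕ => (K:ℝ)^1 / 2^K) atTop (nhds 0) :=
    tendsto_pow_const_div_const_pow_of_one_lt 1 (by norm_num)
  have hgeo2 : Tendsto (fun K : ℕ => (K:ℝ)^2 / 2^K) atTop (nhds 0) :=
    tendsto_pow_const_div_const_pow_of_one_lt 2 (by norm_num)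
  have hev : ∀ᶠ K : ℕ in atTop, (3 ≤ K ∧ Real.log K / K ≤ 1/2 ∧ (Real.log K)^2 / K ≤ 1 ∧
      (K:ℝ)^1 / 2^K ≤ 1/4 ∧ (K:ℝ)^2 / 2^K ≤ 1/2 ∧ 14 ≤ Real.log K ∧ 21 ≤ ε^3 * Real.log K) := by
    have e1 : ∀ᶠ K : ℕ in atTop, 3 ≤ K := eventually_ge_atTop 3
    have e2 := hb_to.eventually_le_const (by norm_num : (0:ℝ) < 1/2)
    have e3 := hb2_to.eventually_le_const (by norm_num : (0:ℝ) < 1)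
    have e4 := hgeo1.eventually_le_const (by norm_num : (0:ℝ) < 1/4)
    have e5 := hgeo2.eventually_le_const (by norm_num : (0:ℝ) < 1/2)
    have e6 := hlogT.eventually_ge_atTop 14
    have e7 := (hlogT.const_mul_atTop (show (0:ℝ) < ε^3 by positivity)).eventually_ge_atTop 21
    filter_upwards [e1, e2, e3, e4, e5, e6, e7] with K h1 h2 h3 h4 h5 h6 h7
    exact ⟨h1, h2, h3, h4, h5, h6, h7⟩
  obtain ⟨K₀, hK₀⟩ := eventually_atTop.1 hev
  refine ⟨fun _ => (20:ℝ), ?_, K₀, ?_⟩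
  · rw [Asymptotics.isLittleO_const_left]
    right
    exact tendsto_abs_atTop_atTop.comp hlogT
  · intro K hKK d hd
    obtain ⟨h3K, hbhalf, hb2_1, hgeo4, hgeo2', hlog14, heps21⟩ := hK₀ K hKK
    have hK1 : 1 ≤ K := by omega
    have hK0R : (0:ℝ) < K := by exact_mod_cast Nat.lt_of_lt_of_le (by norm_num) h3K
    have hlogpos : (0:ℝ) < Real.log K := by linarith only [hlog14]
    have hε2 : ε^2 ≤ 1 := by nlinarith only [hε0, hε1]
    set b := Real.log K / K with hb
    clear_value b
    have hb0 : 0 < b := by rw [hb]; exact div_pos hlogpos hK0R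
    have hbhalf' : b ≤ 1/2 := hbhalf
    have hb1 : b ≤ 1 := by linarith only [hbhalf']
    have hmarg : 0 < ε ^ 2 * (K:ℝ) / Real.log K :=
      div_pos (mul_pos (pow_pos hε0 2) hK0R) hlogpos
    have hm1 : 1 ≤ ⌈ε ^ 2 * (K:ℝ) / Real.log K⌉₊ := Nat.ceil_pos.2 hmarg
    set mR := ((⌈ε ^ 2 * (K:ℝ) / Real.log K⌉₊ : ℕ) : ℝ) with hmR
    clear_value mR
    have hmge : ε^2 * K / Real.log K ≤ mR := by rw [hmR]; exact Nat.le_ceil _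
    have hmle : mR ≤ ε^2 * K / Real.log K + 1 := by
      rw [hmR]; exact (Nat.ceil_lt_add_one hmarg.le).le
    have hm0 : (0:ℝ) < mR := by
      rw [hmR]
      exact_mod_cast hm1
    set W := (1 - b + b^2)^K + b^K with hW
    clear_value W
    have h1b : 0 ≤ 1 - b + b^2 := by nlinarith only [sq_nonneg (1-b), hb0.le]
    have hW0 : 0 ≤ W := by
      rw [hW]; exact add_nonneg (pow_nonneg h1b K) (pow_nonneg hb0.le K)
    have hA : (1 - b + b^2)^K ≤ Real.exp 1 / K := by
      have e1' : 1 - b + b^2 ≤ Real.exp (-(b - b^2)) := by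
        have h := Real.add_one_le_exp (-(b - b^2))
        linarith only [h]
      calc (1-b+b^2)^K ≤ (Real.exp (-(b-b^2)))^K := pow_le_pow_left₀ h1b e1' K
        _ = Real.exp ((K:ℝ)*(-(b-b^2))) := (Real.exp_nat_mul _ K).symm
        _ ≤ Real.exp (1 - Real.log K) := by
            apply Real.exp_le_exp.2
            have hKb : (K:ℝ)*b = Real.log K := by
              rw [hb]; field_simp
            have hKb2 : (K:ℝ)*b^2 = (Real.log K)^2/K := by
              rw [hb]; field_simp
            have hexp : (K:ℝ)*(-(b-b^2)) = -((K:ℝ)*b) + (K:ℝ)*b^2 := by ring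
            rw [hexp, hKb, hKb2]
            linarith only [hb2_1]
        _ = Real.exp 1 / K := by rw [Real.exp_sub, Real.exp_log hK0R]
    have hbK : b^K ≤ (1/2)^K := pow_le_pow_left₀ hb0.le hbhalf' K
    have hmb : mR * b ≤ ε^2 + b := by
      have h' : (ε^2*K/Real.log K + 1)*b = ε^2 + b := by
        rw [hb]; field_simp
      calc mR*b ≤ (ε^2*K/Real.log K + 1)*b := mul_le_mul_of_nonneg_right hmle hb0.le
        _ = ε^2 + b := h'
    have hlogK_le : Real.log K ≤ K := by
      have h := Real.log_le_sub_one_of_pos hK0R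
      linarith only [h]
    have hmlt : mR ≤ 2*K := by
      have h1 : ε^2*K/Real.log K ≤ K := by
        rw [div_le_iff₀ hlogpos]
        have ha : ε^2*(K:ℝ) ≤ 1*K := mul_le_mul_of_nonneg_right hε2 hK0R.le
        have hbb : (K:ℝ)*1 ≤ K*Real.log K :=
          mul_le_mul_of_nonneg_left (by linarith only [hlog14]) hK0R.le
        linarith only [ha, hbb]
      have h2 : (1:ℝ) ≤ K := by exact_mod_cast hK1
      linarith only [h1, h2, hmle]
    have hexp13 : Real.exp 1 ≤ 3 := by
      have h := Real.exp_one_lt_d9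
      linarith only [h]
    have ht1 : mR*(1-b+b^2)^K*Real.log K ≤ 6 := by
      have hs1 : mR*(1-b+b^2)^K*Real.log K ≤ mR*(Real.exp 1/K)*Real.log K := by
        apply mul_le_mul_of_nonneg_right (mul_le_mul_of_nonneg_left hA hm0.le) hlogpos.le
      have hs2 : mR*(Real.exp 1/K)*Real.log K = Real.exp 1 * (mR * b) := by
        rw [hb]; field_simp
      have hs3 : Real.exp 1 * (mR*b) ≤ 3 * (ε^2 + b) := by
        apply mul_le_mul hexp13 hmb (mul_nonneg hm0.le hb0.le) (by norm_num)
      have hs4 : 3*(ε^2 + b) ≤ 6 := by linarith only [hε2, hbhalf']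
      rw [hs2] at hs1
      linarith only [hs1, hs3, hs4]
    have ht2 : mR*b^K*Real.log K ≤ 1 := by
      have hs1 : mR*b^K ≤ (2*K)*(1/2)^K :=
        mul_le_mul hmlt hbK (pow_nonneg hb0.le K) (by positivity)
      have hs2 : mR*b^K*Real.log K ≤ (2*K)*(1/2)^K*K := by
        apply mul_le_mul hs1 hlogK_le hlogpos.le (by positivity)
      have hs3 : (2*(K:ℝ))*(1/2)^K*K = 2*((K:ℝ)^2/2^K) := by
        rw [one_div, inv_pow, div_eq_mul_inv]
        ring
      rw [hs3] at hs2
      linarith only [hs2, hgeo2']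
    have hmW7 : mR*W*Real.log K ≤ 7 := by
      have h : mR*W*Real.log K = mR*(1-b+b^2)^K*Real.log K + mR*b^K*Real.log K := by
        rw [hW]; ring
      linarith only [h, ht1, ht2]
    have hmW : mR*W ≤ 1/2 := by
      have h0 : 0 ≤ mR*W := mul_nonneg hm0.le hW0
      have h14 : 0 ≤ (mR*W)*(Real.log K - 14) := mul_nonneg h0 (by linarith only [hlog14])
      nlinarith only [hmW7, h14]
    set c := (2*mR - 2*mR^2*W)/2^K with hc
    clear_value c
    have h2Kpos : (0:ℝ) < 2^K := by positivity
    have hc0 : 0 ≤ c := by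
      rw [hc]
      apply div_nonneg _ h2Kpos.le
      nlinarith only [mul_le_mul_of_nonneg_left hmW hm0.le, hm0.le]
    have hgeo4' : 4*(K:ℝ) ≤ 2^K := by
      rw [pow_one] at hgeo4
      rw [div_le_iff₀ h2Kpos] at hgeo4
      linarith only [hgeo4]
    have hc1 : c ≤ 1 := by
      rw [hc, div_le_one h2Kpos]
      nlinarith only [mul_nonneg (mul_nonneg (by norm_num : (0:ℝ) ≤ 2) (sq_nonneg mR)) hW0,
        hmlt, hgeo4']
    have hcd : ε^2*(1+ε)*(1 - mR*W)*Real.log K ≤ c*d := by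
      have hd' : c*((1+ε)*2^(K-1)*(Real.log K)^2/K) ≤ c*d := mul_le_mul_of_nonneg_left hd hc0
      have h2K : (2:ℝ)^K = 2*2^(K-1) := by
        have h : K - 1 + 1 = K := by omega
        calc (2:ℝ)^K = 2^(K-1+1) := by rw [h]
          _ = 2*2^(K-1) := by rw [pow_succ']
      have heq : c*((1+ε)*2^(K-1)*(Real.log K)^2/K) = (mR - mR^2*W)*((1+ε)*(Real.log K)^2/K) := by
        rw [hc, h2K]
        have h2K1 : (0:ℝ) < 2^(K-1) := by positivity
        field_simp
      have hfac : 0 ≤ (1 - mR*W)*((1+ε)*(Real.log K)^2/K) := by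
        apply mul_nonneg (by linarith only [hmW])
        apply div_nonneg _ hK0R.le
        exact mul_nonneg (by linarith only [hε0]) (sq_nonneg _)
      have hstep : (ε^2*K/Real.log K)*((1 - mR*W)*((1+ε)*(Real.log K)^2/K))
          ≤ mR*((1 - mR*W)*((1+ε)*(Real.log K)^2/K)) := mul_le_mul_of_nonneg_right hmge hfac
      have heval : (ε^2*K/Real.log K)*((1 - mR*W)*((1+ε)*(Real.log K)^2/K))
          = ε^2*(1+ε)*(1 - mR*W)*Real.log K := by
        field_simp
      have hfold : mR*((1 - mR*W)*((1+ε)*(Real.log K)^2/K)) = (mR - mR^2*W)*((1+ε)*(Real.log K)^2/K) := by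
        ring
      rw [heval, hfold] at hstep
      linarith only [hstep, hd', heq.ge, heq.le]
    have hL0 : 0 ≤ Real.log (1/b) := by
      apply Real.log_nonneg
      rw [le_div_iff₀ hb0]
      linarith only [hb1]
    have hL : Real.log (1/b) ≤ Real.log K := by
      have h1bK : 1/b ≤ K := by
        rw [div_le_iff₀ hb0]
        have hKb : (K:ℝ)*b = Real.log K := by rw [hb]; field_simp
        linarith only [hKb, hlog14]
      exact Real.log_le_log (by positivity) h1bK
    have hbound : ∀ n : ℕ, expectedTuples K d ε n
        ≤ Real.exp (-(n:ℝ)*ε^3*Real.log K + (n:ℝ)*20) := by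
      intro n
      rcases Nat.eq_zero_or_pos n with rfl | hn
      · simpa using st7_zero K d ε
      · have hmaster := st7_master (K := K) (n := n) d ε hn hK1 hm1 (hb ▸ hb0) (hb ▸ hb1)
        refine hmaster.trans ?_
        rw [Real.exp_le_exp]
        rw [← hb, ← hmR, ← hW, ← hc]
        set M := ⌊d * (n:ℝ)⌋₊ with hMdef
        have hn1 : (1:ℝ) ≤ n := by exact_mod_cast hn
        have hd0 : 0 ≤ d := le_trans (by
          apply div_nonneg _ hK0R.le
          exact mul_nonneg (mul_nonneg (by linarith only [hε0]) (by positivity))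
            (sq_nonneg _)) hd
        have hMd : d*(n:ℝ) - 1 ≤ (M:ℝ) := (Nat.sub_one_lt_floor _).le
        have hcM : c*(d*(n:ℝ)) - 1 ≤ c*(M:ℝ) := by
          have h1 : c*(d*(n:ℝ) - 1) ≤ c*(M:ℝ) := mul_le_mul_of_nonneg_left hMd hc0
          have hring : c*(d*(n:ℝ) - 1) = c*(d*(n:ℝ)) - c := by ring
          linarith only [h1, hring, hc1]
        have hmbL : mR*(b*(n:ℝ))*(Real.log (1/b)+1) ≤ (n:ℝ)*(ε^2*Real.log K + 3) := by
          have h1 : mR*b*(Real.log (1/b)+1) ≤ (ε^2+b)*(Real.log K + 1) :=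
            mul_le_mul hmb (by linarith only [hL]) (by linarith only [hL0])
              (by linarith only [sq_nonneg ε, hb0.le])
          have hblog : b*Real.log K ≤ 1 := by
            have hbb : b*Real.log K = (Real.log K)^2/K := by rw [hb]; ring
            exact hbb.le.trans hb2_1
          have h2 : (ε^2+b)*(Real.log K+1) ≤ ε^2*Real.log K + 3 := by
            nlinarith only [hε2, hblog, hb1, hb0.le, hlogpos.le]
          have h3 : mR*(b*(n:ℝ))*(Real.log (1/b)+1) = (n:ℝ)*(mR*b*(Real.log (1/b)+1)) := by ring
          rw [h3]
          exact mul_le_mul_of_nonneg_left (h1.trans h2) (by positivity)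
        have hlog2 : Real.log 2 ≤ 1 := by
          have h := Real.log_le_sub_one_of_pos (show (0:ℝ) < 2 by norm_num)
          linarith only [h]
        have hkey : (ε^2+ε^3)*Real.log K - 14 ≤ ε^2*(1+ε)*(1 - mR*W)*Real.log K := by
          have hexpand : ε^2*(1+ε)*(1 - mR*W)*Real.log K
              = (ε^2+ε^3)*Real.log K - (ε^2*(1+ε))*(mR*W*Real.log K) := by ring
          have hnn : 0 ≤ mR*W*Real.log K := mul_nonneg (mul_nonneg hm0.le hW0) hlogpos.le
          have hb2' : ε^2*(1+ε) ≤ 2 := by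
            have hε3 : ε^2*ε ≤ ε^2*1 := mul_le_mul_of_nonneg_left hε1.le (sq_nonneg ε)
            nlinarith only [hε2, hε3]
          have hmul : (ε^2*(1+ε))*(mR*W*Real.log K) ≤ 2*7 :=
            mul_le_mul hb2' hmW7 hnn (by norm_num)
          rw [hexpand]
          linarith only [hmul]
        have hG3 : (n:ℝ)*((ε^2+ε^3)*Real.log K - 14) ≤ c*(d*(n:ℝ)) := by
          have h1 : (ε^2+ε^3)*Real.log K - 14 ≤ c*d := le_trans hkey hcd
          have h2 : (n:ℝ)*((ε^2+ε^3)*Real.log K - 14) ≤ (n:ℝ)*(c*d) :=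
            mul_le_mul_of_nonneg_left h1 (by positivity)
          have hring2 : (n:ℝ)*(c*d) = c*(d*(n:ℝ)) := by ring
          linarith only [h2, hring2]
        have hnlog2 : (n:ℝ)*Real.log 2 ≤ (n:ℝ) := by
          have h := mul_le_mul_of_nonneg_left hlog2 (show (0:ℝ) ≤ n by positivity)
          simpa using h
        linarith only [hmbL, hcM, hG3, hnlog2, hn1]
    refine ⟨hbound, ?_⟩
    have htends : Tendsto (fun n : ℕ => Real.exp (-(n:ℝ)*ε^3*Real.log K + (n:ℝ)*20))
        atTop (nhds 0) := by
      have hr : Real.exp (20 - ε^3*Real.log K) < 1 := by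
        rw [Real.exp_lt_one_iff]
        linarith only [heps21]
      have h := tendsto_pow_atTop_nhds_zero_of_lt_one (Real.exp_pos _).le hr
      refine h.congr fun n => ?_
      rw [← Real.exp_nat_mul]
      congr 1
      ring
    exact squeeze_zero (fun n => st7_nonneg K d ε n) hbound htends
end

section
/- Let W_ℓ denote the size of generation ℓ of a Galton–Watson branching process with Poisson(β) offspring distribution, β > 1. Let θ = 1 + (eβ)^{-t} and γ_ℓ = (eβ)^{-ℓ}. Then for all 1 ≤ ℓ ≤ t, E[θ^{W_ℓ}] ≤ 1 + γ_{t−ℓ}. -/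
open MeasureTheory Real

lemma exp_le_one_add_e_mul {z : ℝ} (h0 : 0 ≤ z) (h1 : z ≤ 1) :
    Real.exp z ≤ 1 + Real.exp 1 * z := by
  have hc := convexOn_exp.2 (Set.mem_univ (0:ℝ)) (Set.mem_univ (1:ℝ))
    (show (0:ℝ) ≤ 1 - z by linarith) h0 (by ring)
  simp only [smul_eq_mul, mul_zero, mul_one, zero_add, Real.exp_zero] at hc
  nlinarith [Real.exp_pos 1]

lemma gw_step (β : ℝ) (hβ : 1 < β) {s : ℕ} (hs : 1 ≤ s) :
    Real.exp (β * (1 + ((Real.exp 1 * β)⁻¹) ^ s) - β)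
      ≤ 1 + ((Real.exp 1 * β)⁻¹) ^ (s - 1) := by
  set γ : ℝ := (Real.exp 1 * β)⁻¹ with hγ
  have he : (1:ℝ) < Real.exp 1 := by
    have := Real.add_one_le_exp (1:ℝ); linarith
  have heβ : (1:ℝ) < Real.exp 1 * β := by nlinarith
  have hγ0 : 0 < γ := by positivity
  have hγ1 : γ < 1 := by rw [hγ]; exact inv_lt_one_of_one_lt₀ heβ
  have hpow : γ ^ s = γ * γ ^ (s - 1) := by
    conv_lhs => rw [show s = 1 + (s - 1) by omega]
    rw [pow_add, pow_one]
  have hz0 : 0 ≤ β * γ ^ s := by positivity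
  have hz1 : β * γ ^ s ≤ 1 := by
    have h1 : γ ^ s ≤ γ := by
      calc γ ^ s ≤ γ ^ 1 := pow_le_pow_of_le_one hγ0.le hγ1.le hs
        _ = γ := pow_one γ
    have hbg : β * γ = (Real.exp 1)⁻¹ := by
      rw [hγ]; field_simp
    have hinv : (Real.exp 1)⁻¹ ≤ 1 := by
      rw [inv_le_one₀ (Real.exp_pos 1)]; linarith
    nlinarith [mul_le_mul_of_nonneg_left h1 (show (0:ℝ) ≤ β by linarith)]
  have key : Real.exp (β * γ ^ s) ≤ 1 + Real.exp 1 * (β * γ ^ s) :=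
    exp_le_one_add_e_mul hz0 hz1
  have heq : Real.exp 1 * (β * γ ^ s) = γ ^ (s - 1) := by
    rw [hpow, hγ]
    field_simp
  calc Real.exp (β * (1 + γ ^ s) - β) = Real.exp (β * γ ^ s) := by ring_nf
    _ ≤ 1 + Real.exp 1 * (β * γ ^ s) := key
    _ = 1 + γ ^ (s - 1) := by rw [heq]

lemma gw_iter (β : ℝ) (hβ : 1 < β) (t : ℕ) :
    ∀ ℓ, ℓ ≤ t →
      (fun x : ℝ => Real.exp (β * x - β))^[ℓ] (1 + ((Real.exp 1 * β)⁻¹) ^ t)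
        ≤ 1 + ((Real.exp 1 * β)⁻¹) ^ (t - ℓ) := by
  intro ℓ
  induction ℓ with
  | zero => intro _; simp
  | succ n ih =>
    intro hle
    have hn : n ≤ t := by omega
    rw [Function.iterate_succ_apply']
    have hmono : (fun x : ℝ => Real.exp (β * x - β)) ((fun x : ℝ => Real.exp (β * x - β))^[n] (1 + ((Real.exp 1 * β)⁻¹) ^ t))
        ≤ (fun x : ℝ => Real.exp (β * x - β)) (1 + ((Real.exp 1 * β)⁻¹) ^ (t - n)) := by
      simp only
      apply Real.exp_le_exp.2
      have := ih hn
      nlinarith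
    refine hmono.trans ?_
    have h1n : 1 ≤ t - n := by omega
    have := gw_step β hβ h1n
    simpa [show t - n - 1 = t - (n + 1) by omega] using this

/-- For a Poisson(β) Galton–Watson process (`W ℓ` = size of generation ℓ, whose probability
generating function is the ℓ-fold iterate of `G(θ) = exp(βθ - β)`), with `θ = 1 + (eβ)^{-t}`
and `γ_ℓ = (eβ)^{-ℓ}`, one has `E[θ^{W_ℓ}] ≤ 1 + γ_{t-ℓ}` for all `1 ≤ ℓ ≤ t`. -/
theorem stmt9 {Ω : Type*} [MeasurableSpace Ω] (μ : Measure Ω) [IsProbabilityMeasure μ]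
    (β : ℝ) (hβ : 1 < β) (W : ℕ → Ω → ℕ)
    (hpgf : ∀ (ℓ : ℕ) (θ : ℝ), 1 ≤ θ →
      ∫ ω, θ ^ (W ℓ ω) ∂μ = (fun x : ℝ => Real.exp (β * x - β))^[ℓ] θ)
    (t ℓ : ℕ) (h1 : 1 ≤ ℓ) (hℓt : ℓ ≤ t) :
    ∫ ω, (1 + ((Real.exp 1 * β)⁻¹) ^ t) ^ (W ℓ ω) ∂μ
      ≤ 1 + ((Real.exp 1 * β)⁻¹) ^ (t - ℓ) := by
  have hθ : (1:ℝ) ≤ 1 + ((Real.exp 1 * β)⁻¹) ^ t := by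
    have : (0:ℝ) < (Real.exp 1 * β)⁻¹ := by positivity
    nlinarith [pow_pos this t]
  rw [hpgf ℓ _ hθ]
  exact gw_iter β hβ t ℓ hℓt
end
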